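/- arXiv:2510.18607 — 2 statements merged into one kernel-verified Lean document; each statement's English description precedes it below -/
import Mathlib

section
/- Let Γ ≤ ℍ^× be a finite subgroup with |Γ| = m and n ≥ 1, and let A be the finite hyperplane arrangement in ℍ^n consisting of the coordinate hyperplanes {x ∈ ℍ^n : x_i = 0} for 1 ≤ i ≤ n together with the hyperplanes {x ∈ ℍ^n : x_p = γ·x_q} for 1 ≤ p < q ≤ n and γ ∈ Γ. Then the Möbius function μ of the intersection lattice L(A) satisfies ∑_{X ∈ L(A)} (−1)^{codim_ℍ X} μ(X) · t^{codim_ℍ X} = ∏_{k=0}^{n−1} (1 + (1 + k·m)·t) in ℤ[t]. -/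
noncomputable section

local notation "ℍ" => Quaternion ℝ

/-- The coordinate hyperplane `{x ∈ ℍⁿ : x i = 0}`, as a right ℍ-subspace. -/
def coordHyp {n : ℕ} (i : Fin n) : Submodule ℍᵐᵒᵖ (Fin n → ℍ) where
  carrier := {x | x i = 0}
  add_mem' := by
    intro a b ha hb
    simp only [Set.mem_setOf_eq] at *
    rw [Pi.add_apply, ha, hb, add_zero]
  zero_mem' := by simp
  smul_mem' := by
    intro c x hx
    simp only [Set.mem_setOf_eq] at *
    rw [Pi.smul_apply, hx, smul_zero]

/-- The hyperplane `{x ∈ ℍⁿ : x p = γ·x q}`, as a right ℍ-subspace. -/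
def diffHyp {n : ℕ} (p q : Fin n) (γ : ℍ) : Submodule ℍᵐᵒᵖ (Fin n → ℍ) where
  carrier := {x | x p = γ * x q}
  add_mem' := by
    intro a b ha hb
    simp only [Set.mem_setOf_eq] at *
    rw [Pi.add_apply, Pi.add_apply, ha, hb, mul_add]
  zero_mem' := by simp
  smul_mem' := by
    intro c x hx
    simp only [Set.mem_setOf_eq] at *
    rw [Pi.smul_apply, Pi.smul_apply, MulOpposite.smul_eq_mul_unop,
      MulOpposite.smul_eq_mul_unop, hx, mul_assoc]

/-- The hyperplane arrangement of `W_n(Γ)`: the coordinate hyperplanes `{x i = 0}`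
together with the hyperplanes `{x p = γ·x q}` for `p < q` and `γ ∈ Γ`. -/
def arrW (n : ℕ) (Γ : Subgroup ℍˣ) : Set (Submodule ℍᵐᵒᵖ (Fin n → ℍ)) :=
  {H | (∃ i : Fin n, H = coordHyp i) ∨
    ∃ p q : Fin n, p < q ∧ ∃ γ ∈ Γ, H = diffHyp p q (γ : ℍ)}

/-- The intersection lattice `L(A)` of the arrangement: all intersections of subsets of
`A` (the empty intersection being `ℍⁿ = ⊤`). -/
def latW (n : ℕ) (Γ : Subgroup ℍˣ) : Set (Submodule ℍᵐᵒᵖ (Fin n → ℍ)) :=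
  {X | ∃ S ⊆ arrW n Γ, X = sInf S}



namespace WnProof

open scoped Classical

instance {α : Type*} [Finite α] : Finite (Option α) :=
  Finite.of_equiv _ (Equiv.optionEquivSumPUnit.{0} α).symm

variable {n : ℕ} {Γ : Subgroup ℍˣ}

/-- coercion of a group element to a quaternion -/
def qv (γ : Γ) : ℍ := ((γ : ℍˣ) : ℍ)

lemma qv_one : qv (1 : Γ) = 1 := rfl
lemma qv_mul (a b : Γ) : qv (a * b) = qv a * qv b := rfl
lemma qv_ne_zero (a : Γ) : qv a ≠ 0 := Units.ne_zero _
lemma qv_inv_mul (a : Γ) : qv a⁻¹ * qv a = 1 := by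
  rw [← qv_mul, inv_mul_cancel, qv_one]
lemma qv_mul_inv (a : Γ) : qv a * qv a⁻¹ = 1 := by
  rw [← qv_mul, mul_inv_cancel, qv_one]

/-- A combinatorial datum describing an intersection subspace. -/
abbrev Dat (n : ℕ) (Γ : Subgroup ℍˣ) := Fin n → Option (Fin n × Γ)

def Valid (σ : Dat n Γ) : Prop :=
  ∀ i j γ, σ i = some (j, γ) → j ≤ i ∧ σ j = some (j, 1)

/-- the value forced at coordinate `i` by the datum -/
def app (σ : Dat n Γ) (x : Fin n → ℍ) (i : Fin n) : ℍ :=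
  match σ i with
  | none => 0
  | some (j, γ) => qv γ * x j

lemma app_none {σ : Dat n Γ} {x i} (h : σ i = none) : app σ x i = 0 := by
  simp [app, h]

lemma app_some {σ : Dat n Γ} {x i j γ} (h : σ i = some (j, γ)) :
    app σ x i = qv γ * x j := by simp [app, h]

/-- The subspace associated to a datum. -/
def sub (σ : Dat n Γ) : Submodule ℍᵐᵒᵖ (Fin n → ℍ) where
  carrier := {x | ∀ i, x i = app σ x i}
  add_mem' := by
    intro a b ha hb i
    have : app σ (a + b) i = app σ a i + app σ b i := by
      unfold app; rcases h : σ i with _ | ⟨j, γ⟩ <;> simp [mul_add]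
    rw [Pi.add_apply, ha i, hb i, this]
  zero_mem' := by
    intro i
    have : app σ (0 : Fin n → ℍ) i = 0 := by
      unfold app; rcases h : σ i with _ | ⟨j, γ⟩ <;> simp
    simp [this]
  smul_mem' := by
    intro c x hx i
    have : app σ (c • x) i = app σ x i * MulOpposite.unop c := by
      unfold app; rcases h : σ i with _ | ⟨j, γ⟩ <;>
        simp [MulOpposite.smul_eq_mul_unop, mul_assoc]
    rw [Pi.smul_apply, MulOpposite.smul_eq_mul_unop, hx i, this]

lemma mem_sub {σ : Dat n Γ} {x : Fin n → ℍ} :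
    x ∈ sub σ ↔ ∀ i, x i = app σ x i := Iff.rfl

lemma qv_injective : Function.Injective (qv : Γ → ℍ) := fun a b h =>
  Subtype.ext (Units.ext h)

lemma qv_mul_left_cancel {a : Γ} {u v : ℍ} (h : qv a * u = qv a * v) : u = v := by
  have h2 := congrArg (fun z => qv a⁻¹ * z) h
  simpa [← mul_assoc, qv_inv_mul] using h2

lemma shift_iff (a b : Γ) (u v : ℍ) :
    qv a * u = qv b * v ↔ v = qv (b⁻¹ * a) * u := by
  constructor
  · intro h
    apply qv_mul_left_cancel (a := b)
    calc qv b * v = qv a * u := h.symm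
      _ = qv b * (qv (b⁻¹ * a) * u) := by
          rw [← mul_assoc, ← qv_mul, mul_inv_cancel_left]
  · intro h
    rw [h, ← mul_assoc, ← qv_mul, mul_inv_cancel_left]

lemma mem_coord {x : Fin n → ℍ} {i : Fin n} : x ∈ coordHyp i ↔ x i = 0 := Iff.rfl

lemma mem_diff {x : Fin n → ℍ} {p q : Fin n} {γ : ℍ} :
    x ∈ diffHyp p q γ ↔ x p = γ * x q := Iff.rfl

/-- the trivial datum, describing `⊤` -/
def datTop : Dat n Γ := fun i => some (i, 1)

lemma datTop_valid : Valid (datTop (n := n) (Γ := Γ)) := by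
  intro i j γ h
  simp only [datTop, Option.some.injEq, Prod.mk.injEq] at h
  exact ⟨h.1 ▸ le_refl _, by rw [← h.1]; rfl⟩

lemma sub_datTop : sub (datTop (n := n) (Γ := Γ)) = ⊤ := by
  ext x
  simp only [Submodule.mem_top, iff_true, mem_sub]
  intro i
  rw [app_some (by rfl : datTop i = some (i, 1)), qv_one, one_mul]

lemma sub_mem_latW {σ : Dat n Γ} (hσ : Valid σ) : sub σ ∈ latW n Γ := by
  classical
  refine ⟨{H | (∃ i, σ i = none ∧ H = coordHyp i) ∨
      ∃ i j γ, σ i = some (j, γ) ∧ j < i ∧ H = diffHyp j i (qv γ⁻¹)}, ?_, ?_⟩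
  · rintro H (⟨i, _, rfl⟩ | ⟨i, j, γ, hs, hlt, rfl⟩)
    · exact Or.inl ⟨i, rfl⟩
    · exact Or.inr ⟨j, i, hlt, ((γ⁻¹ : Γ) : ℍˣ), SetLike.coe_mem _, rfl⟩
  · apply le_antisymm
    · intro x hx
      rw [Submodule.mem_sInf]
      rintro H (⟨i, hi, rfl⟩ | ⟨i, j, γ, hs, hlt, rfl⟩)
      · rw [mem_coord, hx i, app_none hi]
      · rw [mem_diff, hx i, app_some hs, ← mul_assoc, qv_inv_mul, one_mul]
    · intro x hx
      rw [Submodule.mem_sInf] at hx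
      intro i
      rcases hi : σ i with _ | ⟨j, γ⟩
      · rw [app_none hi]
        exact hx _ (Or.inl ⟨i, hi, rfl⟩)
      · rw [app_some hi]
        rcases lt_or_eq_of_le (hσ i j γ hi).1 with hlt | heq
        · have := hx _ (Or.inr ⟨i, j, γ, hi, hlt, rfl⟩)
          rw [mem_diff] at this
          rw [this, ← mul_assoc, qv_mul_inv, one_mul]
        · have h2 := (hσ i j γ hi).2
          rw [heq, hi] at h2
          simp only [Option.some.injEq, Prod.mk.injEq] at h2
          rw [h2.2, qv_one, one_mul, h2.1]

/-! ### zeroBlock -/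

/-- kill the block with representative `r` -/
def zeroBlock (σ : Dat n Γ) (r : Fin n) : Dat n Γ := fun j =>
  match σ j with
  | none => none
  | some (s, β) => if s = r then none else some (s, β)

lemma zb_eq_some {σ : Dat n Γ} {r i j γ} :
    zeroBlock σ r i = some (j, γ) ↔ σ i = some (j, γ) ∧ j ≠ r := by
  unfold zeroBlock
  rcases h : σ i with _ | ⟨s, β⟩
  · simp
  · by_cases hs : s = r <;> simp [hs] <;> aesop

lemma zb_valid {σ : Dat n Γ} (hσ : Valid σ) (r : Fin n) : Valid (zeroBlock σ r) := by
  intro i j γ h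
  rw [zb_eq_some] at h
  obtain ⟨h1, h2⟩ := h
  exact ⟨(hσ i j γ h1).1, zb_eq_some.2 ⟨(hσ i j γ h1).2, h2⟩⟩

lemma zb_self {σ : Dat n Γ} {r : Fin n} (hr : σ r = some (r, 1)) :
    zeroBlock σ r r = none := by
  unfold zeroBlock; rw [hr]; simp

lemma mem_zb {σ : Dat n Γ} {r : Fin n} (hr : σ r = some (r, 1)) {x : Fin n → ℍ} :
    x ∈ sub (zeroBlock σ r) ↔ x ∈ sub σ ∧ x r = 0 := by
  constructor
  · intro hx
    have hxr : x r = 0 := by rw [hx r, app_none (zb_self hr)]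
    refine ⟨fun i => ?_, hxr⟩
    rcases hi : σ i with _ | ⟨s, β⟩
    · rw [app_none hi, hx i, app_none (by unfold zeroBlock; rw [hi])]
    · rw [app_some hi]
      by_cases hs : s = r
      · subst hs
        rw [hxr, mul_zero, hx i, app_none (by unfold zeroBlock; rw [hi]; simp)]
      · rw [hx i, app_some (zb_eq_some.2 ⟨hi, hs⟩)]
  · rintro ⟨hx, hxr⟩ i
    rcases hi : σ i with _ | ⟨s, β⟩
    · rw [app_none (by unfold zeroBlock; rw [hi]), hx i, app_none hi]
    · by_cases hs : s = r
      · subst hs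
        rw [app_none (by unfold zeroBlock; rw [hi]; simp), hx i, app_some hi, hxr,
          mul_zero]
      · rw [app_some (zb_eq_some.2 ⟨hi, hs⟩), hx i, app_some hi]

/-! ### relabel -/

/-- merge the block of `old` into the block of `new`, where `x old = δ · x new`. -/
def relabel (σ : Dat n Γ) (old new : Fin n) (δ : Γ) : Dat n Γ := fun j =>
  match σ j with
  | none => none
  | some (s, c) => if s = old then some (new, c * δ) else some (s, c)

lemma rl_none {σ : Dat n Γ} {old new : Fin n} {δ : Γ} {i : Fin n} (h : σ i = none) :
    relabel σ old new δ i = none := by unfold relabel; rw [h]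

lemma rl_old {σ : Dat n Γ} {old new : Fin n} {δ : Γ} {i : Fin n} {c : Γ}
    (h : σ i = some (old, c)) : relabel σ old new δ i = some (new, c * δ) := by
  unfold relabel; rw [h]; simp

lemma rl_other {σ : Dat n Γ} {old new : Fin n} {δ : Γ} {i : Fin n} {s : Fin n} {c : Γ}
    (h : σ i = some (s, c)) (hs : s ≠ old) : relabel σ old new δ i = some (s, c) := by
  unfold relabel; rw [h]; simp [hs]

lemma rl_valid {σ : Dat n Γ} (hσ : Valid σ) {old new : Fin n} {δ : Γ}
    (hnew : σ new = some (new, 1)) (hlt : new < old) :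
    Valid (relabel σ old new δ) := by
  intro i j γ h
  rcases hi : σ i with _ | ⟨s, c⟩
  · rw [rl_none hi] at h; cases h
  · by_cases hso : s = old
    · subst hso
      rw [rl_old hi] at h
      simp only [Option.some.injEq, Prod.mk.injEq] at h
      obtain ⟨rfl, -⟩ := h
      exact ⟨le_of_lt (lt_of_lt_of_le hlt (hσ i s c hi).1),
        rl_other hnew (ne_of_lt hlt)⟩
    · rw [rl_other hi hso] at h
      simp only [Option.some.injEq, Prod.mk.injEq] at h
      obtain ⟨rfl, -⟩ := h
      exact ⟨(hσ i s c hi).1, rl_other (hσ i s c hi).2 hso⟩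

lemma mem_rl {σ : Dat n Γ} {old new : Fin n} {δ : Γ}
    (hold : σ old = some (old, 1)) (hne : new ≠ old) {x : Fin n → ℍ} :
    x ∈ sub (relabel σ old new δ) ↔ x ∈ sub σ ∧ x old = qv δ * x new := by
  have hro : relabel σ old new δ old = some (new, 1 * δ) := rl_old hold
  constructor
  · intro hx
    have hxo : x old = qv δ * x new := by
      rw [hx old, app_some hro, one_mul]
    refine ⟨fun i => ?_, hxo⟩
    rcases hi : σ i with _ | ⟨s, c⟩
    · rw [app_none hi, hx i, app_none (rl_none hi)]
    · by_cases hso : s = old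
      · subst hso
        rw [app_some hi, hx i, app_some (rl_old hi), hxo, qv_mul, mul_assoc]
      · rw [app_some hi, hx i, app_some (rl_other hi hso)]
  · rintro ⟨hx, hxo⟩ i
    rcases hi : σ i with _ | ⟨s, c⟩
    · rw [app_none (rl_none hi), hx i, app_none hi]
    · by_cases hso : s = old
      · subst hso
        rw [app_some (rl_old hi), hx i, app_some hi, hxo, qv_mul, mul_assoc]
      · rw [app_some (rl_other hi hso), hx i, app_some hi]

/-! ### meets with hyperplanes -/

def cm (σ : Dat n Γ) (i : Fin n) : Dat n Γ :=
  match σ i with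
  | none => σ
  | some (r, _) => zeroBlock σ r

lemma cm_valid {σ : Dat n Γ} (hσ : Valid σ) (i : Fin n) : Valid (cm σ i) := by
  unfold cm
  rcases h : σ i with _ | ⟨r, γ⟩
  · exact hσ
  · exact zb_valid hσ r

lemma cm_inf {σ : Dat n Γ} (hσ : Valid σ) (i : Fin n) :
    sub σ ⊓ coordHyp i = sub (cm σ i) := by
  rcases hi : σ i with _ | ⟨r, γ⟩
  · have hcm : cm σ i = σ := by unfold cm; rw [hi]
    rw [hcm, inf_eq_left]
    intro x hx
    rw [mem_coord, hx i, app_none hi]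
  · have hcm : cm σ i = zeroBlock σ r := by unfold cm; rw [hi]
    have hr := (hσ i r γ hi).2
    ext x
    rw [hcm, Submodule.mem_inf, mem_coord, mem_zb hr]
    constructor
    · rintro ⟨hx, hxi⟩
      refine ⟨hx, ?_⟩
      have := hx i
      rw [hxi, app_some hi] at this
      rcases mul_eq_zero.1 this.symm with h | h
      · exact absurd h (qv_ne_zero γ)
      · exact h
    · rintro ⟨hx, hxr⟩
      refine ⟨hx, ?_⟩
      rw [hx i, app_some hi, hxr, mul_zero]

def dm (σ : Dat n Γ) (g : Γ) (p q : Fin n) : Dat n Γ :=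
  match σ p, σ q with
  | none, none => σ
  | none, some (r, _) => zeroBlock σ r
  | some (r, _), none => zeroBlock σ r
  | some (rp, α), some (rq, β) =>
    if rp = rq then (if α = g * β then σ else zeroBlock σ rp)
    else if rp < rq then relabel σ rq rp ((g * β)⁻¹ * α)
    else relabel σ rp rq (α⁻¹ * (g * β))

lemma dm_valid {σ : Dat n Γ} (hσ : Valid σ) (g : Γ) (p q : Fin n) :
    Valid (dm σ g p q) := by
  rcases hp : σ p with _ | ⟨rp, α⟩ <;> rcases hq : σ q with _ | ⟨rq, β⟩
  · rwa [show dm σ g p q = σ by unfold dm; rw [hp, hq]]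
  · rw [show dm σ g p q = zeroBlock σ rq by unfold dm; rw [hp, hq]]
    exact zb_valid hσ _
  · rw [show dm σ g p q = zeroBlock σ rp by unfold dm; rw [hp, hq]]
    exact zb_valid hσ _
  · by_cases h1 : rp = rq
    · subst h1
      by_cases h2 : α = g * β
      · rwa [show dm σ g p q = σ by unfold dm; rw [hp, hq]; simp [h2]]
      · rw [show dm σ g p q = zeroBlock σ rp by unfold dm; rw [hp, hq]; simp [h2]]
        exact zb_valid hσ _
    · by_cases h3 : rp < rq
      · rw [show dm σ g p q = relabel σ rq rp ((g * β)⁻¹ * α) by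
          unfold dm; rw [hp, hq]; simp [h1, h3]]
        exact rl_valid hσ (hσ p rp α hp).2 h3
      · have h4 : rq < rp := lt_of_le_of_ne (not_lt.1 h3) (fun h => h1 h.symm)
        rw [show dm σ g p q = relabel σ rp rq (α⁻¹ * (g * β)) by
          unfold dm; rw [hp, hq]; simp [h1, h3]]
        exact rl_valid hσ (hσ q rq β hq).2 h4

lemma dm_inf {σ : Dat n Γ} (hσ : Valid σ) (g : Γ) {p q : Fin n} :
    sub σ ⊓ diffHyp p q (qv g) = sub (dm σ g p q) := by
  ext x
  rw [Submodule.mem_inf, mem_diff]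
  rcases hp : σ p with _ | ⟨rp, α⟩ <;> rcases hq : σ q with _ | ⟨rq, β⟩
  · have hdm : dm σ g p q = σ := by unfold dm; rw [hp, hq]
    rw [hdm]
    constructor
    · exact fun h => h.1
    · intro hx
      exact ⟨hx, by rw [hx p, app_none hp, hx q, app_none hq, mul_zero]⟩
  · have hdm : dm σ g p q = zeroBlock σ rq := by unfold dm; rw [hp, hq]
    have hr := (hσ q rq β hq).2
    rw [hdm, mem_zb hr]
    constructor
    · rintro ⟨hx, hrel⟩
      refine ⟨hx, ?_⟩
      rw [hx p, app_none hp, hx q, app_some hq, ← mul_assoc, ← qv_mul] at hrel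
      rcases mul_eq_zero.1 hrel.symm with h | h
      · exact absurd h (qv_ne_zero _)
      · exact h
    · rintro ⟨hx, hxr⟩
      exact ⟨hx, by rw [hx p, app_none hp, hx q, app_some hq, hxr, mul_zero, mul_zero]⟩
  · have hdm : dm σ g p q = zeroBlock σ rp := by unfold dm; rw [hp, hq]
    have hr := (hσ p rp α hp).2
    rw [hdm, mem_zb hr]
    constructor
    · rintro ⟨hx, hrel⟩
      refine ⟨hx, ?_⟩
      rw [hx p, app_some hp, hx q, app_none hq, mul_zero] at hrel
      rcases mul_eq_zero.1 hrel with h | h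
      · exact absurd h (qv_ne_zero _)
      · exact h
    · rintro ⟨hx, hxr⟩
      exact ⟨hx, by rw [hx p, app_some hp, hx q, app_none hq, hxr, mul_zero, mul_zero]⟩
  · have hrp := (hσ p rp α hp).2
    have hrq := (hσ q rq β hq).2
    have key : ∀ hx : x ∈ sub σ, (x p = qv g * x q ↔ qv α * x rp = qv (g * β) * x rq) := by
      intro hx
      rw [hx p, app_some hp, hx q, app_some hq, ← mul_assoc, ← qv_mul]
    by_cases h1 : rp = rq
    · subst h1
      by_cases h2 : α = g * β
      · have hdm : dm σ g p q = σ := by unfold dm; rw [hp, hq]; simp [h2]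
        rw [hdm]
        constructor
        · exact fun h => h.1
        · intro hx
          exact ⟨hx, (key hx).2 (by rw [h2])⟩
      · have hdm : dm σ g p q = zeroBlock σ rp := by unfold dm; rw [hp, hq]; simp [h2]
        rw [hdm, mem_zb hrp]
        constructor
        · rintro ⟨hx, hrel⟩
          refine ⟨hx, ?_⟩
          have h3 : (qv α - qv (g * β)) * x rp = 0 := by
            rw [sub_mul, (key hx).1 hrel, sub_self]
          rcases mul_eq_zero.1 h3 with h | h
          · exact absurd (sub_eq_zero.1 h) (fun hc => h2 (qv_injective hc))
          · exact h
        · rintro ⟨hx, hxr⟩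
          exact ⟨hx, (key hx).2 (by rw [hxr, mul_zero, mul_zero])⟩
    · by_cases h3 : rp < rq
      · have hdm : dm σ g p q = relabel σ rq rp ((g * β)⁻¹ * α) := by
          unfold dm; rw [hp, hq]; simp [h1, h3]
        rw [hdm, mem_rl hrq (fun h => h1 h)]
        constructor
        · rintro ⟨hx, hrel⟩
          exact ⟨hx, (shift_iff _ _ _ _).1 ((key hx).1 hrel)⟩
        · rintro ⟨hx, hxr⟩
          exact ⟨hx, (key hx).2 ((shift_iff _ _ _ _).2 hxr)⟩
      · have h4 : rq < rp := lt_of_le_of_ne (not_lt.1 h3) (fun h => h1 h.symm)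
        have hdm : dm σ g p q = relabel σ rp rq (α⁻¹ * (g * β)) := by
          unfold dm; rw [hp, hq]; simp [h1, h3]
        rw [hdm, mem_rl hrp (fun h => h1 h.symm)]
        constructor
        · rintro ⟨hx, hrel⟩
          exact ⟨hx, (shift_iff _ _ _ _).1 ((key hx).1 hrel).symm⟩
        · rintro ⟨hx, hxr⟩
          exact ⟨hx, (key hx).2 ((shift_iff _ _ _ _).2 hxr).symm⟩

/-! ### classification -/

lemma arr_finite (hΓ : (Γ : Set ℍˣ).Finite) : (arrW n Γ).Finite := by
  have h1 : (Set.range (coordHyp : Fin n → _)).Finite := Set.finite_range _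
  have h2 : ((fun t : Fin n × Fin n × ℍˣ => diffHyp t.1 t.2.1 (t.2.2 : ℍ)) ''
      (Set.univ ×ˢ Set.univ ×ˢ (Γ : Set ℍˣ))).Finite :=
    ((Set.finite_univ.prod (Set.finite_univ.prod hΓ))).image _
  apply (h1.union h2).subset
  rintro H (⟨i, rfl⟩ | ⟨p, q, hpq, γ, hγ, rfl⟩)
  · exact Or.inl ⟨i, rfl⟩
  · exact Or.inr ⟨(p, q, γ), by simp [hγ], rfl⟩

lemma sInf_classify (T : Finset (Submodule ℍᵐᵒᵖ (Fin n → ℍ))) (hT : ↑T ⊆ arrW n Γ) :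
    ∃ σ : Dat n Γ, Valid σ ∧ sInf (T : Set (Submodule ℍᵐᵒᵖ (Fin n → ℍ))) = sub σ := by
  classical
  induction T using Finset.induction_on with
  | empty => exact ⟨datTop, datTop_valid, by simp [sub_datTop]⟩
  | @insert H T hHT IH =>
    rw [Finset.coe_insert, Set.insert_subset_iff] at hT
    obtain ⟨σ, hσ, hrec⟩ := IH hT.2
    rw [Finset.coe_insert, sInf_insert, hrec]
    rcases hT.1 with ⟨i, rfl⟩ | ⟨p, q, hpq, γ, hγ, rfl⟩
    · exact ⟨cm σ i, cm_valid hσ i, by rw [inf_comm]; exact cm_inf hσ i⟩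
    · exact ⟨dm σ ⟨γ, hγ⟩ p q, dm_valid hσ _ p q,
        by rw [inf_comm]; exact dm_inf hσ ⟨γ, hγ⟩ (p := p) (q := q)⟩

lemma classify (hΓ : (Γ : Set ℍˣ).Finite) :
    ∀ X ∈ latW n Γ, ∃ σ : Dat n Γ, Valid σ ∧ X = sub σ := by
  rintro X ⟨S, hS, rfl⟩
  have hSfin : S.Finite := (arr_finite hΓ).subset hS
  obtain ⟨T, rfl⟩ : ∃ T : Finset (Submodule ℍᵐᵒᵖ (Fin n → ℍ)),
      (↑T : Set (Submodule ℍᵐᵒᵖ (Fin n → ℍ))) = S := hSfin.exists_finset_coe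
  obtain ⟨σ, h1, h2⟩ := sInf_classify T hS
  exact ⟨σ, h1, h2⟩

/-! ### rank -/

/-- the number of blocks (free coordinates) of a datum -/
def rank (σ : Dat n Γ) : ℕ := Fintype.card {j : Fin n // σ j = some (j, 1)}

lemma rank_le (σ : Dat n Γ) : rank σ ≤ n := by
  simpa [rank] using Fintype.card_subtype_le (fun j : Fin n => σ j = some (j, 1))

/-- extend a vector defined on representatives to a member of `sub σ` -/
def extVec (σ : Dat n Γ) (y : {j : Fin n // σ j = some (j, 1)} → ℍ) : Fin n → ℍ :=
  fun i =>
    match σ i with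
    | none => 0
    | some (j, γ) => qv γ * (if h : σ j = some (j, 1) then y ⟨j, h⟩ else 0)

lemma extVec_none {σ : Dat n Γ} {y} {i : Fin n} (hi : σ i = none) :
    extVec σ y i = 0 := by simp [extVec, hi]

lemma extVec_some {σ : Dat n Γ} {y} {i j : Fin n} {γ : Γ} (hi : σ i = some (j, γ))
    (hj : σ j = some (j, 1)) : extVec σ y i = qv γ * y ⟨j, hj⟩ := by
  simp [extVec, hi, hj]

lemma extVec_mem {σ : Dat n Γ} (hσ : Valid σ) (y) : extVec σ y ∈ sub σ := by
  intro i
  rcases hi : σ i with _ | ⟨j, γ⟩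
  · rw [extVec_none hi, app_none hi]
  · have hj := (hσ i j γ hi).2
    rw [extVec_some hi hj, app_some hi, extVec_some hj hj, qv_one, one_mul]

/-- the canonical equivalence of `sub σ` with the product over representatives -/
def repEquiv (σ : Dat n Γ) (hσ : Valid σ) :
    (sub σ) ≃ₗ[ℍᵐᵒᵖ] ({j : Fin n // σ j = some (j, 1)} → ℍ) where
  toFun x := fun j => x.1 j.1
  map_add' _ _ := rfl
  map_smul' _ _ := rfl
  invFun y := ⟨extVec σ y, extVec_mem hσ y⟩
  left_inv := by
    rintro ⟨x, hx⟩
    apply Subtype.ext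
    funext i
    change extVec σ (fun j => x ↑j) i = x i
    rcases hi : σ i with _ | ⟨j, γ⟩
    · rw [extVec_none hi]
      exact ((hx i).trans (app_none hi)).symm
    · have hj := (hσ i j γ hi).2
      rw [extVec_some hi hj]
      exact ((hx i).trans (app_some hi)).symm
  right_inv := by
    intro y
    funext j
    change extVec σ y ↑j = y j
    rw [extVec_some j.2 j.2, qv_one, one_mul]

/-- `ℍ` as a right module over itself is 1-dimensional: it is `ℍᵐᵒᵖ`. -/
def oppEquiv : ℍ ≃ₗ[ℍᵐᵒᵖ] ℍᵐᵒᵖ where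
  toFun := MulOpposite.op
  invFun := MulOpposite.unop
  map_add' _ _ := rfl
  map_smul' _ _ := rfl
  left_inv _ := rfl
  right_inv _ := rfl

lemma finrank_sub {σ : Dat n Γ} (hσ : Valid σ) :
    Module.finrank ℍᵐᵒᵖ (sub σ) = rank σ := by
  have e := (repEquiv σ hσ).trans
    (LinearEquiv.piCongrRight (fun _ => oppEquiv))
  rw [e.finrank_eq, Module.finrank_pi ℍᵐᵒᵖ, rank]

lemma sub_eq_top_iff {σ : Dat n Γ} (hσ : Valid σ) :
    sub σ = ⊤ ↔ ∀ i, σ i = some (i, 1) := by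
  constructor
  · intro h i
    rcases hi : σ i with _ | ⟨j, γ⟩
    · exfalso
      have hx : (fun _ => 1 : Fin n → ℍ) ∈ sub σ := h.symm ▸ Submodule.mem_top
      have := (hx i).trans (app_none hi)
      exact one_ne_zero this
    · by_cases hji : j = i
      · have h2 := (hσ i j γ hi).2
        rw [hji] at h2
        exact hi.symm.trans h2
      · exfalso
        have hx : (fun k => if k = i then 1 else 0 : Fin n → ℍ) ∈ sub σ :=
          h.symm ▸ Submodule.mem_top
        have := (hx i).trans (app_some hi)
        simp [hji] at this
  · intro h
    ext x
    simp only [Submodule.mem_top, iff_true, mem_sub]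
    intro i
    rw [app_some (h i), qv_one, one_mul]

lemma latW_finite (hΓ : (Γ : Set ℍˣ).Finite) : (latW n Γ).Finite := by
  have : Finite Γ := hΓ.to_subtype
  have hr : (Set.range (sub : Dat n Γ → _)).Finite := Set.finite_range _
  apply hr.subset
  intro X hX
  obtain ⟨σ, -, rfl⟩ := classify hΓ X hX
  exact ⟨σ, rfl⟩

/-! ### formal points -/

abbrev Pt (n N : ℕ) (Γ : Subgroup ℍˣ) := Fin n → Option (Γ × Fin N)

variable {N : ℕ}

def realize (x : Pt n N Γ) (v : Fin N → ℍ) : Fin n → ℍ := fun i =>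
  match x i with
  | none => 0
  | some (δ, a) => qv δ * v a

lemma realize_none {x : Pt n N Γ} {v i} (h : x i = none) : realize x v i = 0 := by
  simp [realize, h]

lemma realize_some {x : Pt n N Γ} {v i δ a} (h : x i = some (δ, a)) :
    realize x v i = qv δ * v a := by simp [realize, h]

/-- the combinatorial condition for a point to lie on `sub σ` -/
def OnD (x : Pt n N Γ) (σ : Dat n Γ) : Prop :=
  (∀ i, σ i = none → x i = none) ∧
  ∀ i j γ, σ i = some (j, γ) →
    (x i = none ∧ x j = none) ∨ ∃ δ a, x j = some (δ, a) ∧ x i = some (γ * δ, a)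

lemma onD_iff {x : Pt n N Γ} {σ : Dat n Γ} :
    (∀ v, realize x v ∈ sub σ) ↔ OnD x σ := by
  constructor
  · intro h
    constructor
    · intro i hi
      rcases hxi : x i with _ | ⟨δ, a⟩
      · rfl
      · exfalso
        have := ((h (fun _ => 1)) i).trans (app_none hi)
        rw [realize_some hxi, mul_one] at this
        exact qv_ne_zero δ this
    · intro i j γ hi
      have key : ∀ v, realize x v i = qv γ * realize x v j :=
        fun v => ((h v) i).trans (app_some hi)
      rcases hxi : x i with _ | ⟨δ, a⟩ <;> rcases hxj : x j with _ | ⟨ε, b⟩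
      · exact Or.inl ⟨rfl, rfl⟩
      · exfalso
        have := key (fun _ => 1)
        rw [realize_none hxi, realize_some hxj, mul_one, ← qv_mul] at this
        exact qv_ne_zero (γ * ε) this.symm
      · exfalso
        have := key (fun _ => 1)
        rw [realize_some hxi, realize_none hxj, mul_one, mul_zero] at this
        exact qv_ne_zero δ this
      · by_cases hab : a = b
        · subst hab
          refine Or.inr ⟨ε, a, rfl, ?_⟩
          have := key (fun _ => 1)
          rw [realize_some hxi, realize_some hxj, mul_one, mul_one, ← qv_mul] at this
          rw [qv_injective this]
        · exfalso
          have := key (fun c => if c = a then 1 else 0)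
          rw [realize_some hxi, realize_some hxj, if_pos rfl,
            if_neg (fun hc => hab hc.symm), mul_one, mul_zero, mul_zero] at this
          exact qv_ne_zero δ this
  · intro hOn v i
    rcases hi : σ i with _ | ⟨j, γ⟩
    · rw [app_none hi, realize_none (hOn.1 i hi)]
    · rw [app_some hi]
      rcases hOn.2 i j γ hi with ⟨h1, h2⟩ | ⟨δ, a, h1, h2⟩
      · rw [realize_none h1, realize_none h2, mul_zero]
      · rw [realize_some h1, realize_some h2, qv_mul, mul_assoc]

/-! ### counting points on a subspace -/

/-- extend a partial point on the representatives -/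
def extPt (σ : Dat n Γ) (y : {j : Fin n // σ j = some (j, 1)} → Option (Γ × Fin N)) :
    Pt n N Γ := fun i =>
  match σ i with
  | none => none
  | some (j, γ) =>
    if h : σ j = some (j, 1) then Option.map (fun p => (γ * p.1, p.2)) (y ⟨j, h⟩)
    else none

lemma extPt_none {σ : Dat n Γ} {y : {j : Fin n // σ j = some (j, 1)} → Option (Γ × Fin N)}
    {i : Fin n} (hi : σ i = none) :
    extPt σ y i = none := by simp [extPt, hi]

lemma extPt_some {σ : Dat n Γ} {y : {j : Fin n // σ j = some (j, 1)} → Option (Γ × Fin N)}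
    {i j : Fin n} {γ : Γ} (hi : σ i = some (j, γ))
    (hj : σ j = some (j, 1)) :
    extPt σ y i = Option.map (fun p => (γ * p.1, p.2)) (y ⟨j, hj⟩) := by
  simp [extPt, hi, hj]

lemma onD_extPt {σ : Dat n Γ} (hσ : Valid σ)
    (y : {j : Fin n // σ j = some (j, 1)} → Option (Γ × Fin N)) : OnD (extPt σ y) σ := by
  constructor
  · exact fun i hi => extPt_none hi
  · intro i j γ hi
    have hj := (hσ i j γ hi).2
    rw [extPt_some hi hj, extPt_some hj hj]
    rcases hy : y ⟨j, hj⟩ with _ | ⟨δ, a⟩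
    · exact Or.inl ⟨rfl, rfl⟩
    · exact Or.inr ⟨1 * δ, a, rfl, by simp [mul_assoc]⟩

/-- points on `sub σ` are equivalent to free choices on the representatives -/
def onDEquiv (σ : Dat n Γ) (hσ : Valid σ) :
    {x : Pt n N Γ // OnD x σ} ≃ ({j : Fin n // σ j = some (j, 1)} → Option (Γ × Fin N)) where
  toFun x := fun j => x.1 j.1
  invFun y := ⟨extPt σ y, onD_extPt hσ y⟩
  left_inv := by
    rintro ⟨x, hx⟩
    apply Subtype.ext
    funext i
    change extPt σ (fun j => x ↑j) i = x i
    rcases hi : σ i with _ | ⟨j, γ⟩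
    · rw [extPt_none hi, (hx.1 i hi)]
    · have hj := (hσ i j γ hi).2
      rw [extPt_some hi hj]
      rcases hx.2 i j γ hi with ⟨h1, h2⟩ | ⟨δ, a, h1, h2⟩
      · simp [h1, h2]
      · simp [h1, h2]
  right_inv := by
    intro y
    funext j
    change extPt σ y ↑j = y j
    rw [extPt_some j.2 j.2]
    rcases hy : y j with _ | ⟨δ, a⟩ <;> simp [hy]

lemma card_onD [Fintype Γ] {σ : Dat n Γ} (hσ : Valid σ) :
    Fintype.card {x : Pt n N Γ // OnD x σ} = (1 + Fintype.card Γ * N) ^ rank σ := by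
  rw [Fintype.card_congr (onDEquiv σ hσ), Fintype.card_fun]
  congr 1
  simp [add_comm, mul_comm]

/-! ### the support of a point -/

def idxSet (x : Pt n N Γ) (a : Fin N) : Finset (Fin n) :=
  Finset.univ.filter (fun k => ∃ δ, x k = some (δ, a))

lemma mem_idxSet {x : Pt n N Γ} {a : Fin N} {i δ} (h : x i = some (δ, a)) :
    i ∈ idxSet x a := Finset.mem_filter.2 ⟨Finset.mem_univ i, δ, h⟩

lemma min_mem (x : Pt n N Γ) (a : Fin N) (h : (idxSet x a).Nonempty) :
    ∃ δ, x ((idxSet x a).min' h) = some (δ, a) :=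
  (Finset.mem_filter.1 ((idxSet x a).min'_mem h)).2

def repOf (x : Pt n N Γ) (a : Fin N) (h : (idxSet x a).Nonempty) : Fin n :=
  (idxSet x a).min' h

def labOf (x : Pt n N Γ) (a : Fin N) (h : (idxSet x a).Nonempty) : Γ :=
  Classical.choose (min_mem x a h)

lemma labOf_spec (x : Pt n N Γ) (a : Fin N) (h : (idxSet x a).Nonempty) :
    x (repOf x a h) = some (labOf x a h, a) := Classical.choose_spec (min_mem x a h)

/-- the support datum of a point -/
def supD (x : Pt n N Γ) : Dat n Γ := fun i =>
  match x i with
  | none => none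
  | some (δ, a) =>
    if h : (idxSet x a).Nonempty then some (repOf x a h, δ * (labOf x a h)⁻¹)
    else none

lemma supD_none {x : Pt n N Γ} {i} (h : x i = none) : supD x i = none := by
  simp [supD, h]

lemma supD_some {x : Pt n N Γ} {i δ a} (hx : x i = some (δ, a)) :
    ∀ h : (idxSet x a).Nonempty, supD x i = some (repOf x a h, δ * (labOf x a h)⁻¹) := by
  intro h
  simp [supD, hx, dif_pos h]

lemma supD_valid (x : Pt n N Γ) : Valid (supD x) := by
  intro i j γ hs
  rcases hx : x i with _ | ⟨δ, a⟩
  · rw [supD_none hx] at hs; cases hs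
  · have h : (idxSet x a).Nonempty := ⟨i, mem_idxSet hx⟩
    rw [supD_some hx h] at hs
    simp only [Option.some.injEq, Prod.mk.injEq] at hs
    obtain ⟨rfl, -⟩ := hs
    constructor
    · exact Finset.min'_le _ _ (mem_idxSet hx)
    · rw [supD_some (labOf_spec x a h) h]
      simp [mul_inv_cancel]

lemma onD_supD (x : Pt n N Γ) : OnD x (supD x) := by
  constructor
  · intro i hi
    rcases hx : x i with _ | ⟨δ, a⟩
    · rfl
    · rw [supD_some hx ⟨i, mem_idxSet hx⟩] at hi
      cases hi
  · intro i j γ hs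
    rcases hx : x i with _ | ⟨δ, a⟩
    · rw [supD_none hx] at hs; cases hs
    · have h : (idxSet x a).Nonempty := ⟨i, mem_idxSet hx⟩
      rw [supD_some hx h] at hs
      simp only [Option.some.injEq, Prod.mk.injEq] at hs
      obtain ⟨rfl, rfl⟩ := hs
      exact Or.inr ⟨labOf x a h, a, labOf_spec x a h, by rw [inv_mul_cancel_right]⟩

lemma supD_min {x : Pt n N Γ} {τ : Dat n Γ} (hOn : OnD x τ) :
    sub (supD x) ≤ sub τ := by
  intro y hy
  intro i
  rcases hti : τ i with _ | ⟨j, γ⟩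
  · rw [app_none hti, hy i, app_none (supD_none (hOn.1 i hti))]
  · rw [app_some hti]
    rcases hOn.2 i j γ hti with ⟨h1, h2⟩ | ⟨δ, a, h1, h2⟩
    · rw [hy i, app_none (supD_none h1), hy j, app_none (supD_none h2), mul_zero]
    · have h : (idxSet x a).Nonempty := ⟨j, mem_idxSet h1⟩
      rw [hy i, app_some (supD_some h2 h), hy j, app_some (supD_some h1 h), ← mul_assoc,
        ← qv_mul, mul_assoc γ δ]

/-- points with full support -/
def Full (x : Pt n N Γ) : Prop :=
  (∀ i, ∃ p, x i = some p) ∧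
  ∀ i j δ ε a, x i = some (δ, a) → x j = some (ε, a) → i = j

lemma supD_top_iff {x : Pt n N Γ} : sub (supD x) = ⊤ ↔ Full x := by
  rw [sub_eq_top_iff (supD_valid x)]
  constructor
  · intro h
    constructor
    · intro i
      rcases hx : x i with _ | ⟨δ, a⟩
      · exfalso
        have := h i
        rw [supD_none hx] at this
        cases this
      · exact ⟨(δ, a), rfl⟩
    · intro i j δ ε a hxi hxj
      have hne : (idxSet x a).Nonempty := ⟨i, mem_idxSet hxi⟩
      have hi := h i
      have hj := h j
      rw [supD_some hxi hne] at hi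
      rw [supD_some hxj hne] at hj
      simp only [Option.some.injEq, Prod.mk.injEq] at hi hj
      rw [← hi.1, ← hj.1]
  · rintro ⟨h1, h2⟩ i
    obtain ⟨⟨δ, a⟩, hx⟩ := h1 i
    have hne : (idxSet x a).Nonempty := ⟨i, mem_idxSet hx⟩
    have hrep : repOf x a hne = i := h2 _ _ _ _ _ (labOf_spec x a hne) hx
    have hlab : labOf x a hne = δ := by
      have := labOf_spec x a hne
      rw [hrep, hx] at this
      simp only [Option.some.injEq, Prod.mk.injEq] at this
      exact this.1.symm
    rw [supD_some hx hne, hrep, hlab, mul_inv_cancel]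

def fget (x : {x : Pt n N Γ // Full x}) (i : Fin n) : Γ × Fin N :=
  (x.1 i).get (Option.isSome_iff_exists.2 (x.2.1 i))

lemma fget_spec (x : {x : Pt n N Γ // Full x}) (i : Fin n) :
    x.1 i = some (fget x i) := (Option.some_get _).symm

/-- full points are equivalent to a group labelling plus an injection of indices -/
def fullEquiv (n N : ℕ) (Γ : Subgroup ℍˣ) :
    {x : Pt n N Γ // Full x} ≃
      (Fin n → Γ) × {g : Fin n → Fin N // Function.Injective g} where
  toFun x :=
    ⟨fun i => (fget x i).1,
     ⟨fun i => (fget x i).2, by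
        intro i j hij
        dsimp only at hij
        refine x.2.2 i j (fget x i).1 (fget x j).1 (fget x j).2 ?_ ?_
        · rw [← hij, Prod.mk.eta]
          exact fget_spec x i
        · rw [Prod.mk.eta]
          exact fget_spec x j⟩⟩
  invFun fg :=
    ⟨fun i => some (fg.1 i, fg.2.1 i),
     ⟨fun i => ⟨_, rfl⟩, by
        intro i j δ ε a h1 h2
        simp only [Option.some.injEq, Prod.mk.injEq] at h1 h2
        exact fg.2.2 (h1.2.trans h2.2.symm)⟩⟩
  left_inv := by
    rintro ⟨x, hx⟩
    apply Subtype.ext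
    funext i
    exact (fget_spec ⟨x, hx⟩ i).symm
  right_inv := by
    rintro ⟨f, g, hg⟩
    refine Prod.ext ?_ ?_
    · funext i; rfl
    · apply Subtype.ext; funext i; rfl

lemma card_full [Fintype Γ] :
    Fintype.card {x : Pt n N Γ // Full x} =
      Fintype.card Γ ^ n * N.descFactorial n := by
  rw [Fintype.card_congr ((fullEquiv n N Γ).trans
      (Equiv.prodCongr (Equiv.refl _) (Equiv.subtypeInjectiveEquivEmbedding _ _))),
    Fintype.card_prod, Fintype.card_fun, Fintype.card_embedding_eq, Fintype.card_fin,
    Fintype.card_fin]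

/-! ### polynomial gymnastics -/

open Polynomial

lemma reflect_finset_sum {α : Type*} (s : Finset α) (f : α → ℤ[X]) (M : ℕ) :
    reflect M (∑ a ∈ s, f a) = ∑ a ∈ s, reflect M (f a) := by
  classical
  induction s using Finset.induction_on with
  | empty => simp [reflect_zero]
  | @insert a s ha IH => rw [Finset.sum_insert ha, Finset.sum_insert ha, reflect_add, IH]

lemma reflect_one_X_sub_C (c : ℤ) : reflect 1 ((X : ℤ[X]) - C c) = 1 - C c * X := by
  have h : (X : ℤ[X]) - C c = C 1 * X ^ 1 + C (-c) * X ^ 0 := by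
    simp [C_neg, sub_eq_add_neg]
  rw [h, reflect_add, reflect_C_mul_X_pow, reflect_C_mul_X_pow,
    revAt_le (le_refl 1), revAt_le (Nat.zero_le 1)]
  simp [C_neg, sub_eq_add_neg]

lemma reflect_prod_X_sub_C (c : ℕ → ℤ) :
    ∀ s : ℕ, (∏ k ∈ Finset.range s, ((X : ℤ[X]) - C (c k))).natDegree ≤ s ∧
      reflect s (∏ k ∈ Finset.range s, ((X : ℤ[X]) - C (c k))) =
        ∏ k ∈ Finset.range s, (1 - C (c k) * X)
  | 0 => by
    constructor
    · simp
    · rw [Finset.range_zero, Finset.prod_empty, Finset.prod_empty]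
      have : (1 : ℤ[X]) = C 1 * X ^ 0 := by simp
      rw [this, reflect_C_mul_X_pow]
      simp
  | (s + 1) => by
    obtain ⟨hdeg, hrefl⟩ := reflect_prod_X_sub_C c s
    constructor
    · rw [Finset.prod_range_succ]
      exact le_trans (natDegree_mul_le)
        (add_le_add hdeg (natDegree_X_sub_C_le (c s)))
    · rw [Finset.prod_range_succ,
        show s + 1 = s + 1 from rfl]
      rw [reflect_mul _ _ hdeg (natDegree_X_sub_C_le (c s)), hrefl,
        reflect_one_X_sub_C, Finset.prod_range_succ]

lemma comp_term (a : ℤ) (d : ℕ) :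
    ((C a * X ^ d : ℤ[X])).comp (-X) = C ((-1) ^ d * a) * X ^ d := by
  rw [mul_comp, C_comp, pow_comp, X_comp, neg_pow,
    show ((-1 : ℤ[X])) ^ d = C ((-1 : ℤ) ^ d) by rw [map_pow, map_neg, map_one],
    ← mul_assoc, ← C_mul, mul_comm a]

lemma comp_factor (c : ℤ) :
    ((1 - C c * X : ℤ[X])).comp (-X) = 1 + C c * X := by
  rw [sub_comp, one_comp, mul_comp, C_comp, X_comp, mul_neg, sub_neg_eq_add]

end WnProof

open WnProof in
open Polynomial in
/-- For the reflection arrangement of `W_n(Γ)` with `|Γ| = m`, the characteristic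
polynomial built from the Möbius function `μ` of the intersection lattice (normalized by
`μ(ℍⁿ) = 1` and `∑_{Z ⊇ X} μ(Z) = 0` for `X ≠ ℍⁿ`) satisfies
`∑_{X ∈ L(A)} (−1)^{codim X} μ(X) t^{codim X} = ∏_{k=0}^{n−1} (1 + (1 + k·m)·t)`. -/
theorem poincare_polynomial_Wn_arrangement (n : ℕ) (Γ : Subgroup ℍˣ)
    (hΓ : (Γ : Set ℍˣ).Finite) (m : ℕ) (hm : Nat.card Γ = m)
    (μ : Submodule ℍᵐᵒᵖ (Fin n → ℍ) → ℤ)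
    (hμtop : μ ⊤ = 1)
    (hμ : ∀ X ∈ latW n Γ, X ≠ ⊤ →
      ∑ᶠ Z ∈ {Z ∈ latW n Γ | X ≤ Z}, μ Z = 0) :
    ∑ᶠ Y ∈ latW n Γ,
        C ((-1) ^ (n - Module.finrank ℍᵐᵒᵖ Y) * μ Y) *
          (X : ℤ[X]) ^ (n - Module.finrank ℍᵐᵒᵖ Y) =
      ∏ k ∈ Finset.range n, (1 + C (1 + (k : ℤ) * (m : ℤ)) * X) := by
  classical
  have hfinΓ : Finite Γ := hΓ.to_subtype
  have hfty : Fintype Γ := Fintype.ofFinite Γ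
  have hmcard : Fintype.card Γ = m := by rw [← Nat.card_eq_fintype_card, hm]
  have hm1 : 1 ≤ m := by rw [← hmcard]; exact Fintype.card_pos
  have hlat : (latW n Γ).Finite := latW_finite hΓ
  set T : Finset (Submodule ℍᵐᵒᵖ (Fin n → ℍ)) := hlat.toFinset with hTdef
  have hmemT : ∀ Y, Y ∈ T ↔ Y ∈ latW n Γ := fun Y => hlat.mem_toFinset
  have hT : (T : Set (Submodule ℍᵐᵒᵖ (Fin n → ℍ))) = latW n Γ := hlat.coe_toFinset
  have htopT : ⊤ ∈ T := (hmemT ⊤).2 ⟨∅, Set.empty_subset _, sInf_empty.symm⟩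
  have hrankle : ∀ Y ∈ T, Module.finrank ℍᵐᵒᵖ Y ≤ n := by
    intro Y hY
    obtain ⟨σ, hσ, rfl⟩ := classify hΓ Y ((hmemT Y).1 hY)
    rw [finrank_sub hσ]
    exact rank_le σ
  set P : ℤ[X] := ∑ Y ∈ T, C (μ Y) * X ^ (Module.finrank ℍᵐᵒᵖ Y) with hP
  set R : ℤ[X] := ∏ k ∈ Finset.range n, (X - C (1 + (k : ℤ) * (m : ℤ))) with hR
  -- the evaluation identity via point counting
  have key : ∀ M : ℕ, P.eval (1 + (m : ℤ) * M) = R.eval (1 + (m : ℤ) * M) := by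
    intro M
    have expand : P.eval (1 + (m : ℤ) * M) =
        ∑ Y ∈ T, μ Y * (1 + (m : ℤ) * M) ^ (Module.finrank ℍᵐᵒᵖ Y) := by
      rw [hP, eval_finset_sum]
      exact Finset.sum_congr rfl (fun Y _ => by rw [eval_mul, eval_C, eval_pow, eval_X])
    have hcard : ∀ Y ∈ T, ((1 + (m : ℤ) * M) ^ (Module.finrank ℍᵐᵒᵖ Y)) =
        (Fintype.card {x : Pt n M Γ // ∀ v, realize x v ∈ Y} : ℤ) := by
      intro Y hY
      obtain ⟨σ, hσ, rfl⟩ := classify hΓ Y ((hmemT Y).1 hY)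
      have e : {x : Pt n M Γ // ∀ v, realize x v ∈ sub σ} ≃ {x : Pt n M Γ // OnD x σ} :=
        Equiv.subtypeEquivRight (fun x => onD_iff)
      rw [Fintype.card_congr e, card_onD hσ, finrank_sub hσ, hmcard]
      push_cast
      ring
    have hc : ∀ Y : Submodule ℍᵐᵒᵖ (Fin n → ℍ),
        (Fintype.card {x : Pt n M Γ // ∀ v, realize x v ∈ Y} : ℤ) =
          ∑ x : Pt n M Γ, if (∀ v, realize x v ∈ Y) then (1 : ℤ) else 0 := by
      intro Y
      rw [Fintype.card_subtype, Finset.sum_boole]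
    have inner : ∀ x : Pt n M Γ,
        (∑ Y ∈ T, if (∀ v, realize x v ∈ Y) then μ Y else 0) =
          if Full x then (1 : ℤ) else 0 := by
      intro x
      have hiff : ∀ Y ∈ T, ((∀ v, realize x v ∈ Y) ↔ sub (supD x) ≤ Y) := by
        intro Y hY
        obtain ⟨σ, hσ, rfl⟩ := classify hΓ Y ((hmemT Y).1 hY)
        constructor
        · intro h
          exact supD_min (onD_iff.1 h)
        · intro hle v
          exact hle (onD_iff.2 (onD_supD x) v)
      calc (∑ Y ∈ T, if (∀ v, realize x v ∈ Y) then μ Y else 0)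
          = ∑ Y ∈ T, if sub (supD x) ≤ Y then μ Y else 0 :=
            Finset.sum_congr rfl (fun Y hY => if_congr (hiff Y hY) rfl rfl)
        _ = ∑ Y ∈ T.filter (fun Y => sub (supD x) ≤ Y), μ Y := (Finset.sum_filter _ _).symm
        _ = if Full x then (1 : ℤ) else 0 := by
            by_cases htop : sub (supD x) = ⊤
            · rw [if_pos (supD_top_iff.1 htop)]
              have hsingle : T.filter (fun Y => sub (supD x) ≤ Y) = {⊤} := by
                apply Finset.ext
                intro Z
                simp only [Finset.mem_filter, Finset.mem_singleton]
                constructor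
                · rintro ⟨hZ, hle⟩
                  exact top_unique (htop ▸ hle)
                · rintro rfl
                  exact ⟨htopT, le_top⟩
              rw [hsingle, Finset.sum_singleton, hμtop]
            · rw [if_neg (fun hf => htop (supD_top_iff.2 hf))]
              have hXmem : sub (supD x) ∈ latW n Γ := sub_mem_latW (supD_valid x)
              have h0 := hμ (sub (supD x)) hXmem htop
              have hseteq : {Z | Z ∈ latW n Γ ∧ sub (supD x) ≤ Z} =
                  (↑(T.filter (fun Y => sub (supD x) ≤ Y)) :
                    Set (Submodule ℍᵐᵒᵖ (Fin n → ℍ))) := by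
                ext Z
                simp only [Set.mem_setOf_eq, Finset.coe_filter, hmemT]
              rw [hseteq, finsum_mem_coe_finset] at h0
              exact h0
    have double : ∑ Y ∈ T, μ Y *
        (Fintype.card {x : Pt n M Γ // ∀ v, realize x v ∈ Y} : ℤ) =
        (Fintype.card {x : Pt n M Γ // Full x} : ℤ) := by
      calc ∑ Y ∈ T, μ Y * (Fintype.card {x : Pt n M Γ // ∀ v, realize x v ∈ Y} : ℤ)
          = ∑ Y ∈ T, ∑ x : Pt n M Γ, (if (∀ v, realize x v ∈ Y) then μ Y else 0) := by
            refine Finset.sum_congr rfl (fun Y _ => ?_)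
            rw [hc Y, Finset.mul_sum]
            exact Finset.sum_congr rfl (fun x _ => by rw [mul_ite, mul_one, mul_zero])
        _ = ∑ x : Pt n M Γ, ∑ Y ∈ T, (if (∀ v, realize x v ∈ Y) then μ Y else 0) :=
            Finset.sum_comm
        _ = ∑ x : Pt n M Γ, (if Full x then (1 : ℤ) else 0) :=
            Finset.sum_congr rfl (fun x _ => inner x)
        _ = (Fintype.card {x : Pt n M Γ // Full x} : ℤ) := by
            rw [Finset.sum_boole, Fintype.card_subtype]
    have hfull : (Fintype.card {x : Pt n M Γ // Full x} : ℤ) =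
        R.eval (1 + (m : ℤ) * M) := by
      rw [card_full, hR, eval_prod]
      simp only [eval_sub, eval_X, eval_C]
      have hterm : ∀ k ∈ Finset.range n,
          (1 + (m : ℤ) * M - (1 + (k : ℤ) * (m : ℤ))) = (m : ℤ) * ((M : ℤ) - k) := by
        intro k _
        ring
      rw [Finset.prod_congr rfl hterm, Finset.prod_mul_distrib, Finset.prod_const,
        Finset.card_range, hmcard]
      rcases le_or_gt n M with hnM | hMn
      · rw [Nat.cast_mul, Nat.cast_pow]
        congr 1
        rw [Nat.descFactorial_eq_prod_range, Nat.cast_prod]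
        refine Finset.prod_congr rfl (fun k hk => ?_)
        have hkM : k ≤ M := le_trans (le_of_lt (Finset.mem_range.1 hk)) hnM
        rw [Nat.cast_sub hkM]
      · rw [Nat.descFactorial_eq_zero_iff_lt.2 hMn]
        rw [Finset.prod_eq_zero (Finset.mem_range.2 hMn) (by rw [sub_self])]
        simp
    rw [expand, Finset.sum_congr rfl (fun Y hY => by rw [hcard Y hY]), double, hfull]
  -- infinitely many evaluations agree, so P = R
  have hm0 : (m : ℤ) ≠ 0 := by
    have : 0 < m := hm1
    exact_mod_cast this.ne'
  have hinj : Function.Injective (fun M : ℕ => (1 + (m : ℤ) * M)) := by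
    intro a b h
    simp only [add_right_inj] at h
    exact Nat.cast_injective (mul_left_cancel₀ hm0 h)
  have hPR : P = R := by
    apply Polynomial.eq_of_infinite_eval_eq
    apply Set.infinite_of_injective_forall_mem hinj
    intro M
    exact key M
  -- transform to the reflected/negated statement
  have hLHS : ∑ᶠ Y ∈ latW n Γ,
      C ((-1) ^ (n - Module.finrank ℍᵐᵒᵖ Y) * μ Y) *
        (X : ℤ[X]) ^ (n - Module.finrank ℍᵐᵒᵖ Y) = ((reflect n P).comp (-X)) := by
    rw [← hT, finsum_mem_coe_finset, hP, reflect_finset_sum]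
    have hcs : (∑ Y ∈ T, reflect n (C (μ Y) * X ^ (Module.finrank ℍᵐᵒᵖ Y))).comp
        ((-X : ℤ[X])) = ∑ Y ∈ T,
          (reflect n (C (μ Y) * X ^ (Module.finrank ℍᵐᵒᵖ Y))).comp (-X) :=
      map_sum (compRingHom (-X : ℤ[X])) _ T
    rw [hcs]
    refine Finset.sum_congr rfl (fun Y hY => ?_)
    rw [reflect_C_mul_X_pow, revAt_le (hrankle Y hY), comp_term]
  have hRHS : ((reflect n R).comp (-X)) =
      ∏ k ∈ Finset.range n, (1 + C (1 + (k : ℤ) * (m : ℤ)) * X) := by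
    rw [hR, (reflect_prod_X_sub_C (fun k => 1 + (k : ℤ) * (m : ℤ)) n).2]
    have hcp : (∏ k ∈ Finset.range n, (1 - C (1 + (k : ℤ) * (m : ℤ)) * X)).comp
        ((-X : ℤ[X])) = ∏ k ∈ Finset.range n,
          ((1 - C (1 + (k : ℤ) * (m : ℤ)) * X).comp (-X)) :=
      prod_comp _ _ _
    rw [hcp]
    exact Finset.prod_congr rfl (fun k _ => comp_factor _)
  rw [hLHS, hPR, hRHS]
end
end

section
/- On the set S₁ of 36 lines in ℍ⁴, the relation ℓ ~ ℓ' defined by 'ℓ = ℓ' or ℓ is orthogonal to ℓ'' is an equivalence relation, and it has exactly 9 equivalence classes (called frames), each consisting of 4 mutually orthogonal lines. -/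
noncomputable section

local notation "ℍ" => Quaternion ℝ

/-- The standard Hermitian form on `ℍ⁴`, conjugate-linear in the first variable and
ℍ-linear in the second: `⟨x,y⟩ = ∑ i, star (x i) * y i`. -/
def qInner {n : ℕ} (x y : Fin n → ℍ) : ℍ := ∑ i, star (x i) * y i

/-- The ℍ-line `vℍ` spanned by `v` (the set of right scalar multiples of `v`). -/
def lineOf {n : ℕ} (v : Fin n → ℍ) : Set (Fin n → ℍ) := {w | ∃ c : ℍ, w = fun i => v i * c}

/-- Two lines are orthogonal when `⟨x,y⟩ = 0` for all `x` in one and `y` in the other. -/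
def linesOrth {n : ℕ} (ℓ ℓ' : Set (Fin n → ℍ)) : Prop := ∀ x ∈ ℓ, ∀ y ∈ ℓ', qInner x y = 0

/-- The quaternion `i`. -/
def qi : ℍ := ⟨0, 1, 0, 0⟩
/-- The quaternion `j`. -/
def qj : ℍ := ⟨0, 0, 1, 0⟩
/-- The quaternion `k`. -/
def qk : ℍ := ⟨0, 0, 0, 1⟩

/-- The quadruple `(1, i, j, k)`. -/
def baseQuat : Fin 4 → ℍ := ![1, qi, qj, qk]

/-- The line system `S₁` of 36 lines in `ℍ⁴`: the 12 lines spanned by `e_p + ε e_q`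
(`p < q`, `ε = ±1`) together with the 24 lines spanned by the signed permutations of
`(1,i,j,k)` with an even number of minus signs (i.e. product of signs `= 1`). -/
def S1 : Set (Set (Fin 4 → ℍ)) :=
  {ℓ | (∃ p q : Fin 4, p < q ∧ ∃ ε : ℍ, (ε = 1 ∨ ε = -1) ∧
          ℓ = lineOf (Pi.single p 1 + Pi.single q ε)) ∨
       (∃ σ : Equiv.Perm (Fin 4), ∃ s : Fin 4 → ℍ, (∀ i, s i = 1 ∨ s i = -1) ∧
          s 0 * s 1 * s 2 * s 3 = 1 ∧ ℓ = lineOf fun idx => s idx * baseQuat (σ idx))}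

/-- The frame relation on lines: `ℓ ~ ℓ'` iff `ℓ = ℓ'` or `ℓ ⊥ ℓ'`. -/
def frameRel (ℓ ℓ' : Set (Fin 4 → ℍ)) : Prop := ℓ = ℓ' ∨ linesOrth ℓ ℓ'


/-! ### Auxiliary machinery: transfer to integer quaternions -/

abbrev QZ := Quaternion ℤ

instance : DecidableEq QZ := fun a b =>
  decidable_of_iff (a.re = b.re ∧ a.imI = b.imI ∧ a.imJ = b.imJ ∧ a.imK = b.imK)
    ⟨fun ⟨h1,h2,h3,h4⟩ => by ext <;> assumption, fun h => by subst h; exact ⟨rfl,rfl,rfl,rfl⟩⟩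

def phi : QZ →+* ℍ where
  toFun a := ⟨(a.re : ℝ), a.imI, a.imJ, a.imK⟩
  map_one' := by ext <;> simp [Quaternion.re_one, Quaternion.imI_one, Quaternion.imJ_one, Quaternion.imK_one]
  map_mul' a b := by
    ext <;> simp [Quaternion.re_mul, Quaternion.imI_mul, Quaternion.imJ_mul, Quaternion.imK_mul] <;> erw [QuaternionAlgebra.mk_mul_mk] <;> simp <;> ring
  map_zero' := by ext <;> simp [Quaternion.re_zero, Quaternion.imI_zero, Quaternion.imJ_zero, Quaternion.imK_zero]
  map_add' a b := by ext <;> simp <;> rfl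

lemma phi_apply (a : QuaternionAlgebra ℤ (-1) 0 (-1)) : phi a = ⟨(a.re : ℝ), a.imI, a.imJ, a.imK⟩ := rfl

lemma phi_apply' (a : QZ) : phi a = ⟨(a.re : ℝ), a.imI, a.imJ, a.imK⟩ := rfl

lemma phi_inj : Function.Injective phi := by
  intro a b h
  have h1 : ((a.re : ℝ)) = b.re := congrArg QuaternionAlgebra.re h
  have h2 : ((a.imI : ℝ)) = b.imI := congrArg QuaternionAlgebra.imI h
  have h3 : ((a.imJ : ℝ)) = b.imJ := congrArg QuaternionAlgebra.imJ h
  have h4 : ((a.imK : ℝ)) = b.imK := congrArg QuaternionAlgebra.imK h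
  ext
  · exact_mod_cast h1
  · exact_mod_cast h2
  · exact_mod_cast h3
  · exact_mod_cast h4

lemma phi_star (a : QZ) : phi (star a) = star (phi a) := by
  ext
  · rw [Quaternion.re_star, phi_apply', phi_apply']; simp [Quaternion.re_star]
  · rw [Quaternion.imI_star, phi_apply', phi_apply']; simp [Quaternion.imI_star]
  · rw [Quaternion.imJ_star, phi_apply', phi_apply']; simp [Quaternion.imJ_star]
  · rw [Quaternion.imK_star, phi_apply', phi_apply']; simp [Quaternion.imK_star]

def qInnerZ (x y : Fin 4 → QZ) : QZ := ∑ i, star (x i) * y i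

lemma qInner_map (x y : Fin 4 → QZ) : qInner (phi ∘ x) (phi ∘ y) = phi (qInnerZ x y) := by
  simp [qInner, qInnerZ, map_sum, phi_star, Function.comp]

lemma self_mem_lineOf {n : ℕ} (v : Fin n → ℍ) : v ∈ lineOf v := ⟨1, by simp⟩

lemma lineOf_subset {n : ℕ} {v w : Fin n → ℍ} (h : w ∈ lineOf v) : lineOf w ⊆ lineOf v := by
  obtain ⟨c, rfl⟩ := h
  rintro x ⟨d, rfl⟩
  exact ⟨c * d, by funext i; simp [mul_assoc]⟩

lemma qInner_smul (x y : Fin 4 → ℍ) (c d : ℍ) :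
    qInner (fun i => x i * c) (fun i => y i * d) = star c * qInner x y * d := by
  unfold qInner
  rw [Finset.mul_sum, Finset.sum_mul]
  congr 1; funext i
  simp [star_mul, mul_assoc]

lemma orth_iff (v w : Fin 4 → QZ) :
    linesOrth (lineOf (phi ∘ v)) (lineOf (phi ∘ w)) ↔ qInnerZ v w = 0 := by
  constructor
  · intro h
    have := h _ (self_mem_lineOf _) _ (self_mem_lineOf _)
    apply phi_inj
    rw [← qInner_map, this, map_zero]
  · rintro h x ⟨c, rfl⟩ y ⟨d, rfl⟩
    have h0 : qInner (phi ∘ v) (phi ∘ w) = 0 := by rw [qInner_map, h, map_zero]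
    rw [qInner_smul, h0, mul_zero, zero_mul]

def lineEqHalf (v w : Fin 4 → QZ) : Prop :=
  ∃ i₀ : Fin 4, star (v i₀) * v i₀ = 1 ∧ w = fun i => v i * (star (v i₀) * w i₀)

def lineEqZ (v w : Fin 4 → QZ) : Prop := lineEqHalf v w ∧ lineEqHalf w v

instance (v w : Fin 4 → QZ) : Decidable (lineEqHalf v w) := by unfold lineEqHalf; infer_instance
instance (v w : Fin 4 → QZ) : Decidable (lineEqZ v w) := by unfold lineEqZ; infer_instance

lemma half_mem {v w : Fin 4 → QZ} (h : lineEqHalf v w) : phi ∘ w ∈ lineOf (phi ∘ v) := by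
  obtain ⟨i₀, _, hw⟩ := h
  refine ⟨phi (star (v i₀) * w i₀), funext fun i => ?_⟩
  show phi (w i) = phi (v i) * phi (star (v i₀) * w i₀)
  rw [← map_mul]
  exact congrArg phi (congrFun hw i)

lemma lineEq_forward {v w : Fin 4 → QZ} (h : lineEqZ v w) :
    lineOf (phi ∘ v) = lineOf (phi ∘ w) :=
  Set.Subset.antisymm (lineOf_subset (half_mem h.2)) (lineOf_subset (half_mem h.1))

lemma lineEq_backward {v w : Fin 4 → QZ} (hv : ∃ i₀, star (v i₀) * v i₀ = 1)
    (hw : ∃ j₀, star (w j₀) * w j₀ = 1)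
    (h : lineOf (phi ∘ v) = lineOf (phi ∘ w)) : lineEqZ v w := by
  constructor
  · obtain ⟨i₀, hi⟩ := hv
    have hm : phi ∘ w ∈ lineOf (phi ∘ v) := h ▸ self_mem_lineOf (phi ∘ w)
    obtain ⟨C, hC⟩ := hm
    have hCi : phi (w i₀) = phi (v i₀) * C := congrFun hC i₀
    have hCval : C = phi (star (v i₀) * w i₀) := by
      have h1 : phi (star (v i₀) * v i₀) = 1 := by rw [hi, map_one]
      calc C = phi (star (v i₀) * v i₀) * C := by rw [h1, one_mul]
        _ = phi (star (v i₀)) * (phi (v i₀) * C) := by rw [map_mul, mul_assoc]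
        _ = phi (star (v i₀)) * phi (w i₀) := by rw [hCi]
        _ = phi (star (v i₀) * w i₀) := by rw [map_mul]
    refine ⟨i₀, hi, funext fun i => phi_inj ?_⟩
    have := congrFun hC i
    simp only [Function.comp] at this
    rw [map_mul, ← hCval, this]
  · obtain ⟨j₀, hj⟩ := hw
    have hm : phi ∘ v ∈ lineOf (phi ∘ w) := h ▸ self_mem_lineOf (phi ∘ v)
    obtain ⟨C, hC⟩ := hm
    have hCi : phi (v j₀) = phi (w j₀) * C := congrFun hC j₀
    have hCval : C = phi (star (w j₀) * v j₀) := by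
      have h1 : phi (star (w j₀) * w j₀) = 1 := by rw [hj, map_one]
      calc C = phi (star (w j₀) * w j₀) * C := by rw [h1, one_mul]
        _ = phi (star (w j₀)) * (phi (w j₀) * C) := by rw [map_mul, mul_assoc]
        _ = phi (star (w j₀)) * phi (v j₀) := by rw [hCi]
        _ = phi (star (w j₀) * v j₀) := by rw [map_mul]
    refine ⟨j₀, hj, funext fun i => phi_inj ?_⟩
    have := congrFun hC i
    simp only [Function.comp] at this
    rw [map_mul, ← hCval, this]

def VQ : Fin 36 → Fin 4 → QZ := ![
  ![(⟨1,0,0,0⟩ : QZ), (⟨1,0,0,0⟩ : QZ), (⟨0,0,0,0⟩ : QZ), (⟨0,0,0,0⟩ : QZ)],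
  ![(⟨1,0,0,0⟩ : QZ), (⟨-1,0,0,0⟩ : QZ), (⟨0,0,0,0⟩ : QZ), (⟨0,0,0,0⟩ : QZ)],
  ![(⟨1,0,0,0⟩ : QZ), (⟨0,0,0,0⟩ : QZ), (⟨1,0,0,0⟩ : QZ), (⟨0,0,0,0⟩ : QZ)],
  ![(⟨1,0,0,0⟩ : QZ), (⟨0,0,0,0⟩ : QZ), (⟨-1,0,0,0⟩ : QZ), (⟨0,0,0,0⟩ : QZ)],
  ![(⟨1,0,0,0⟩ : QZ), (⟨0,0,0,0⟩ : QZ), (⟨0,0,0,0⟩ : QZ), (⟨1,0,0,0⟩ : QZ)],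
  ![(⟨1,0,0,0⟩ : QZ), (⟨0,0,0,0⟩ : QZ), (⟨0,0,0,0⟩ : QZ), (⟨-1,0,0,0⟩ : QZ)],
  ![(⟨0,0,0,0⟩ : QZ), (⟨1,0,0,0⟩ : QZ), (⟨1,0,0,0⟩ : QZ), (⟨0,0,0,0⟩ : QZ)],
  ![(⟨0,0,0,0⟩ : QZ), (⟨1,0,0,0⟩ : QZ), (⟨-1,0,0,0⟩ : QZ), (⟨0,0,0,0⟩ : QZ)],
  ![(⟨0,0,0,0⟩ : QZ), (⟨1,0,0,0⟩ : QZ), (⟨0,0,0,0⟩ : QZ), (⟨1,0,0,0⟩ : QZ)],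
  ![(⟨0,0,0,0⟩ : QZ), (⟨1,0,0,0⟩ : QZ), (⟨0,0,0,0⟩ : QZ), (⟨-1,0,0,0⟩ : QZ)],
  ![(⟨0,0,0,0⟩ : QZ), (⟨0,0,0,0⟩ : QZ), (⟨1,0,0,0⟩ : QZ), (⟨1,0,0,0⟩ : QZ)],
  ![(⟨0,0,0,0⟩ : QZ), (⟨0,0,0,0⟩ : QZ), (⟨1,0,0,0⟩ : QZ), (⟨-1,0,0,0⟩ : QZ)],
  ![(⟨1,0,0,0⟩ : QZ), (⟨0,-1,0,0⟩ : QZ), (⟨0,0,-1,0⟩ : QZ), (⟨0,0,0,1⟩ : QZ)],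
  ![(⟨1,0,0,0⟩ : QZ), (⟨0,-1,0,0⟩ : QZ), (⟨0,0,0,-1⟩ : QZ), (⟨0,0,1,0⟩ : QZ)],
  ![(⟨1,0,0,0⟩ : QZ), (⟨0,-1,0,0⟩ : QZ), (⟨0,0,0,1⟩ : QZ), (⟨0,0,-1,0⟩ : QZ)],
  ![(⟨1,0,0,0⟩ : QZ), (⟨0,-1,0,0⟩ : QZ), (⟨0,0,1,0⟩ : QZ), (⟨0,0,0,-1⟩ : QZ)],
  ![(⟨1,0,0,0⟩ : QZ), (⟨0,0,-1,0⟩ : QZ), (⟨0,-1,0,0⟩ : QZ), (⟨0,0,0,1⟩ : QZ)],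
  ![(⟨1,0,0,0⟩ : QZ), (⟨0,0,-1,0⟩ : QZ), (⟨0,0,0,-1⟩ : QZ), (⟨0,1,0,0⟩ : QZ)],
  ![(⟨1,0,0,0⟩ : QZ), (⟨0,0,-1,0⟩ : QZ), (⟨0,0,0,1⟩ : QZ), (⟨0,-1,0,0⟩ : QZ)],
  ![(⟨1,0,0,0⟩ : QZ), (⟨0,0,-1,0⟩ : QZ), (⟨0,1,0,0⟩ : QZ), (⟨0,0,0,-1⟩ : QZ)],
  ![(⟨1,0,0,0⟩ : QZ), (⟨0,0,0,-1⟩ : QZ), (⟨0,-1,0,0⟩ : QZ), (⟨0,0,1,0⟩ : QZ)],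
  ![(⟨1,0,0,0⟩ : QZ), (⟨0,0,0,-1⟩ : QZ), (⟨0,0,-1,0⟩ : QZ), (⟨0,1,0,0⟩ : QZ)],
  ![(⟨1,0,0,0⟩ : QZ), (⟨0,0,0,-1⟩ : QZ), (⟨0,0,1,0⟩ : QZ), (⟨0,-1,0,0⟩ : QZ)],
  ![(⟨1,0,0,0⟩ : QZ), (⟨0,0,0,-1⟩ : QZ), (⟨0,1,0,0⟩ : QZ), (⟨0,0,-1,0⟩ : QZ)],
  ![(⟨1,0,0,0⟩ : QZ), (⟨0,0,0,1⟩ : QZ), (⟨0,-1,0,0⟩ : QZ), (⟨0,0,-1,0⟩ : QZ)],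
  ![(⟨1,0,0,0⟩ : QZ), (⟨0,0,0,1⟩ : QZ), (⟨0,0,-1,0⟩ : QZ), (⟨0,-1,0,0⟩ : QZ)],
  ![(⟨1,0,0,0⟩ : QZ), (⟨0,0,0,1⟩ : QZ), (⟨0,0,1,0⟩ : QZ), (⟨0,1,0,0⟩ : QZ)],
  ![(⟨1,0,0,0⟩ : QZ), (⟨0,0,0,1⟩ : QZ), (⟨0,1,0,0⟩ : QZ), (⟨0,0,1,0⟩ : QZ)],
  ![(⟨1,0,0,0⟩ : QZ), (⟨0,0,1,0⟩ : QZ), (⟨0,-1,0,0⟩ : QZ), (⟨0,0,0,-1⟩ : QZ)],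
  ![(⟨1,0,0,0⟩ : QZ), (⟨0,0,1,0⟩ : QZ), (⟨0,0,0,-1⟩ : QZ), (⟨0,-1,0,0⟩ : QZ)],
  ![(⟨1,0,0,0⟩ : QZ), (⟨0,0,1,0⟩ : QZ), (⟨0,0,0,1⟩ : QZ), (⟨0,1,0,0⟩ : QZ)],
  ![(⟨1,0,0,0⟩ : QZ), (⟨0,0,1,0⟩ : QZ), (⟨0,1,0,0⟩ : QZ), (⟨0,0,0,1⟩ : QZ)],
  ![(⟨1,0,0,0⟩ : QZ), (⟨0,1,0,0⟩ : QZ), (⟨0,0,-1,0⟩ : QZ), (⟨0,0,0,-1⟩ : QZ)],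
  ![(⟨1,0,0,0⟩ : QZ), (⟨0,1,0,0⟩ : QZ), (⟨0,0,0,-1⟩ : QZ), (⟨0,0,-1,0⟩ : QZ)],
  ![(⟨1,0,0,0⟩ : QZ), (⟨0,1,0,0⟩ : QZ), (⟨0,0,0,1⟩ : QZ), (⟨0,0,1,0⟩ : QZ)],
  ![(⟨1,0,0,0⟩ : QZ), (⟨0,1,0,0⟩ : QZ), (⟨0,0,1,0⟩ : QZ), (⟨0,0,0,1⟩ : QZ)]]

def fFrame : Fin 36 → Fin 9 := ![0, 0, 1, 1, 2, 2, 2, 2, 1, 1, 0, 0, 3, 4, 4, 3, 5, 6, 6, 5, 7, 8, 8, 7, 7, 8, 8, 7, 5, 6, 6, 5, 3, 4, 4, 3]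

def sigTab : Fin 24 → Fin 4 → Fin 4 := ![
  ![0, 1, 2, 3],
  ![0, 1, 3, 2],
  ![0, 1, 3, 2],
  ![0, 1, 2, 3],
  ![0, 2, 1, 3],
  ![0, 2, 3, 1],
  ![0, 2, 3, 1],
  ![0, 2, 1, 3],
  ![0, 3, 1, 2],
  ![0, 3, 2, 1],
  ![0, 3, 2, 1],
  ![0, 3, 1, 2],
  ![0, 3, 1, 2],
  ![0, 3, 2, 1],
  ![0, 3, 2, 1],
  ![0, 3, 1, 2],
  ![0, 2, 1, 3],
  ![0, 2, 3, 1],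
  ![0, 2, 3, 1],
  ![0, 2, 1, 3],
  ![0, 1, 2, 3],
  ![0, 1, 3, 2],
  ![0, 1, 3, 2],
  ![0, 1, 2, 3]]

def sigInvTab : Fin 24 → Fin 4 → Fin 4 := ![
  ![0, 1, 2, 3],
  ![0, 1, 3, 2],
  ![0, 1, 3, 2],
  ![0, 1, 2, 3],
  ![0, 2, 1, 3],
  ![0, 3, 1, 2],
  ![0, 3, 1, 2],
  ![0, 2, 1, 3],
  ![0, 2, 3, 1],
  ![0, 3, 2, 1],
  ![0, 3, 2, 1],
  ![0, 2, 3, 1],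
  ![0, 2, 3, 1],
  ![0, 3, 2, 1],
  ![0, 3, 2, 1],
  ![0, 2, 3, 1],
  ![0, 2, 1, 3],
  ![0, 3, 1, 2],
  ![0, 3, 1, 2],
  ![0, 2, 1, 3],
  ![0, 1, 2, 3],
  ![0, 1, 3, 2],
  ![0, 1, 3, 2],
  ![0, 1, 2, 3]]

def tTab : Fin 24 → Fin 4 → Bool := ![
  ![true, false, false, true],
  ![true, false, false, true],
  ![true, false, true, false],
  ![true, false, true, false],
  ![true, false, false, true],
  ![true, false, false, true],
  ![true, false, true, false],
  ![true, false, true, false],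
  ![true, false, false, true],
  ![true, false, false, true],
  ![true, false, true, false],
  ![true, false, true, false],
  ![true, true, false, false],
  ![true, true, false, false],
  ![true, true, true, true],
  ![true, true, true, true],
  ![true, true, false, false],
  ![true, true, false, false],
  ![true, true, true, true],
  ![true, true, true, true],
  ![true, true, false, false],
  ![true, true, false, false],
  ![true, true, true, true],
  ![true, true, true, true]]


def baseZ : Fin 4 → QZ := ![⟨1,0,0,0⟩, ⟨0,1,0,0⟩, ⟨0,0,1,0⟩, ⟨0,0,0,1⟩]
def sgnZ (b : Bool) : QZ := if b then 1 else -1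
def singleZ (p q : Fin 4) (e : Bool) : Fin 4 → QZ :=
  fun i => (if i = p then 1 else 0) + (if i = q then sgnZ e else 0)
def permVecZ (σ : Equiv.Perm (Fin 4)) (t : Fin 4 → Bool) : Fin 4 → QZ :=
  fun idx => sgnZ (t idx) * baseZ (σ idx)
def canonZ (v : Fin 4 → QZ) : Fin 4 → QZ := fun i => v i * star (v 0)

lemma hleft : ∀ m x, sigInvTab m (sigTab m x) = x := by decide
lemma hright : ∀ m x, sigTab m (sigInvTab m x) = x := by decide

def permOf (m : Fin 24) : Equiv.Perm (Fin 4) :=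
  ⟨sigTab m, sigInvTab m, hleft m, hright m⟩

set_option maxRecDepth 10000 in
lemma D1 : ∀ p q : Fin 4, p < q → ∀ e : Bool, ∃ n : Fin 36, singleZ p q e = VQ n := by decide

set_option maxRecDepth 10000 in
lemma U2 : ∀ (b : Bool) (m : Fin 4),
    (sgnZ b * baseZ m) * star (sgnZ b * baseZ m) = 1 ∧
    star (sgnZ b * baseZ m) * (sgnZ b * baseZ m) = 1 := by decide

set_option maxRecDepth 40000 in
set_option maxHeartbeats 2000000 in
lemma D2 : ∀ (σ : Equiv.Perm (Fin 4)) (t : Fin 4 → Bool),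
    sgnZ (t 0) * sgnZ (t 1) * sgnZ (t 2) * sgnZ (t 3) = 1 →
    ∃ n : Fin 36, canonZ (permVecZ σ t) = VQ n := by decide

set_option maxRecDepth 10000 in
lemma D3a : ∀ m : Fin 24, VQ (⟨12 + m.1, by omega⟩ : Fin 36) = permVecZ (permOf m) (tTab m) := by decide

set_option maxRecDepth 10000 in
lemma D3b : ∀ m : Fin 24,
    sgnZ (tTab m 0) * sgnZ (tTab m 1) * sgnZ (tTab m 2) * sgnZ (tTab m 3) = 1 := by decide

set_option maxRecDepth 10000 in
lemma D3c : ∀ n : Fin 36, n.1 < 12 → ∃ p q : Fin 4, p < q ∧ ∃ e : Bool, VQ n = singleZ p q e := by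
  decide

set_option maxRecDepth 10000 in
lemma D4 : ∀ n, ∃ i₀, star (VQ n i₀) * VQ n i₀ = 1 := by decide

set_option maxRecDepth 40000 in
set_option maxHeartbeats 4000000 in
lemma D5 : ∀ m n, lineEqZ (VQ m) (VQ n) → m = n := by decide

set_option maxRecDepth 40000 in
set_option maxHeartbeats 4000000 in
lemma D6 : ∀ m n : Fin 36, (m = n ∨ qInnerZ (VQ m) (VQ n) = 0) ↔ fFrame m = fFrame n := by decide

lemma D7 : ∀ v : Fin 9, ∃ n, fFrame n = v := by decide

set_option maxRecDepth 10000 in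
lemma D8 : ∀ v : Fin 9, (Finset.univ.filter (fun n : Fin 36 => fFrame n = v)).card = 4 := by decide

/-! ### Real-side glue -/

def L (n : Fin 36) : Set (Fin 4 → ℍ) := lineOf (phi ∘ VQ n)

lemma L_inj : Function.Injective L := fun m n h => D5 m n (lineEq_backward (D4 m) (D4 n) h)

lemma base_phi : ∀ m : Fin 4, baseQuat m = phi (baseZ m) := by
  intro m
  fin_cases m <;> ext <;>
    simp [baseQuat, baseZ, qi, qj, qk, phi_apply, Quaternion.re_one, Quaternion.imI_one, Quaternion.imJ_one, Quaternion.imK_one] <;> rfl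

lemma sgn_phi (b : Bool) : (if b then (1:ℍ) else -1) = phi (sgnZ b) := by
  cases b <;> simp [sgnZ]

lemma single_phi (p q : Fin 4) (e : Bool) :
    Pi.single p (1:ℍ) + Pi.single q (if e then (1:ℍ) else -1) = phi ∘ singleZ p q e := by
  funext i
  simp only [Pi.add_apply, Pi.single_apply, Function.comp_apply, singleZ, map_add,
    apply_ite phi, map_one, map_zero, sgn_phi]

lemma permVec_phi (σ : Equiv.Perm (Fin 4)) (t : Fin 4 → Bool) :
    (fun idx => (if t idx then (1:ℍ) else -1) * baseQuat (σ idx)) = phi ∘ permVecZ σ t := by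
  funext idx
  show _ = phi (permVecZ σ t idx)
  rw [sgn_phi, base_phi, permVecZ, map_mul]

lemma line_mul_unit (v : Fin 4 → QZ) (c : QZ) (h : c * star c = 1) :
    lineOf (phi ∘ v) = lineOf (phi ∘ fun i => v i * c) := by
  refine Set.Subset.antisymm (lineOf_subset ?_) (lineOf_subset ?_)
  · refine ⟨phi (star c), funext fun i => ?_⟩
    show phi (v i) = phi (v i * c) * phi (star c)
    rw [← map_mul, mul_assoc, h, mul_one]
    
  · exact ⟨phi c, funext fun i => by show phi (v i * c) = phi (v i) * phi c; rw [map_mul]⟩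

lemma canon_line (σ : Equiv.Perm (Fin 4)) (t : Fin 4 → Bool) :
    lineOf (phi ∘ permVecZ σ t) = lineOf (phi ∘ canonZ (permVecZ σ t)) := by
  have h := (U2 (t 0) (σ 0)).2
  exact line_mul_unit _ _ (by
    show star (permVecZ σ t 0) * star (star (permVecZ σ t 0)) = 1
    rw [star_star]
    exact h)

lemma S1_eq : S1 = Set.range L := by
  ext ℓ
  constructor
  · rintro (⟨p, q, hpq, ε, hε, rfl⟩ | ⟨σ, s, hs, hprod, rfl⟩)
    · obtain ⟨e, he⟩ : ∃ e : Bool, ε = if e then (1:ℍ) else -1 :=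
        hε.elim (fun h => ⟨true, by simp [h]⟩) (fun h => ⟨false, by simp [h]⟩)
      obtain ⟨n, hn⟩ := D1 p q hpq e
      exact ⟨n, by rw [L, ← hn, ← single_phi, he]⟩
    · have hb : ∀ i, ∃ b : Bool, s i = if b then (1:ℍ) else -1 := fun i =>
        (hs i).elim (fun h => ⟨true, by simp [h]⟩) (fun h => ⟨false, by simp [h]⟩)
      choose t ht using hb
      have hsgn : ∀ i, s i = phi (sgnZ (t i)) := fun i => by rw [ht i, sgn_phi]
      have hprodZ : sgnZ (t 0) * sgnZ (t 1) * sgnZ (t 2) * sgnZ (t 3) = 1 := by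
        apply phi_inj
        rw [map_one, map_mul, map_mul, map_mul, ← hsgn 0, ← hsgn 1, ← hsgn 2, ← hsgn 3]
        exact hprod
      obtain ⟨n, hn⟩ := D2 σ t hprodZ
      have hfun : (fun idx => s idx * baseQuat (σ idx)) = phi ∘ permVecZ σ t := by
        funext idx
        rw [hsgn idx, base_phi]
        show phi (sgnZ (t idx)) * phi (baseZ (σ idx)) = phi (permVecZ σ t idx)
        rw [← map_mul]; rfl
      refine ⟨n, ?_⟩
      rw [L, ← hn, ← canon_line, ← hfun]
  · rintro ⟨n, rfl⟩
    by_cases hn : n.1 < 12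
    · obtain ⟨p, q, hpq, e, he⟩ := D3c n hn
      refine Or.inl ⟨p, q, hpq, if e then (1:ℍ) else -1, by cases e <;> simp, ?_⟩
      rw [single_phi, L, he]
    · have hm : n.1 - 12 < 24 := by omega
      set m : Fin 24 := ⟨n.1 - 12, hm⟩ with hmdef
      have hnm : n = (⟨12 + m.1, by omega⟩ : Fin 36) := by
        apply Fin.ext; simp [hmdef]; omega
      refine Or.inr ⟨permOf m, fun i => if tTab m i then (1:ℍ) else -1,
        fun i => by by_cases hb : tTab m i <;> simp [hb], ?_, ?_⟩
      · simp only [sgn_phi]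
        rw [← map_mul, ← map_mul, ← map_mul, D3b m, map_one]
      · rw [L, hnm, D3a m, permVec_phi]

/-- On the set `S₁` of 36 lines in `ℍ⁴`, the relation "equal or orthogonal" is an
equivalence relation with exactly 9 classes (frames), each consisting of 4 mutually
orthogonal lines. -/
theorem frames_of_S1 :
    Nat.card S1 = 36 ∧
    ∃ h : Equivalence fun a b : {ℓ // ℓ ∈ S1} => frameRel a.1 b.1,
      Nat.card (Quotient (Setoid.mk _ h)) = 9 ∧
      ∀ a : {ℓ // ℓ ∈ S1}, Nat.card {b : {ℓ // ℓ ∈ S1} // frameRel a.1 b.1} = 4 := by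
  have frameRel_L : ∀ m n : Fin 36, frameRel (L m) (L n) ↔ fFrame m = fFrame n := by
    intro m n
    rw [← D6]
    constructor
    · rintro (h | h)
      · exact Or.inl (L_inj h)
      · exact Or.inr ((orth_iff _ _).mp h)
    · rintro (rfl | h)
      · exact Or.inl rfl
      · exact Or.inr ((orth_iff _ _).mpr h)
  have hmem : ∀ a : {ℓ // ℓ ∈ S1}, ∃ n, L n = a.1 := by
    intro a
    exact (Set.ext_iff.mp S1_eq a.1).mp a.2
  choose idx hidx using hmem
  have memL : ∀ n : Fin 36, L n ∈ S1 := by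
    intro n; exact (Set.ext_iff.mp S1_eq (L n)).mpr ⟨n, rfl⟩
  have idx_L : ∀ (n : Fin 36) (h : L n ∈ S1), idx ⟨L n, h⟩ = n := by
    intro n h
    exact L_inj (hidx ⟨L n, h⟩)
  have key : ∀ a b : {ℓ // ℓ ∈ S1}, frameRel a.1 b.1 ↔ fFrame (idx a) = fFrame (idx b) := by
    intro a b
    rw [← hidx a, ← hidx b]
    exact frameRel_L _ _
  constructor
  · rw [S1_eq]
    rw [Nat.card_range_of_injective L_inj]
    simp
  · have h : Equivalence fun a b : {ℓ // ℓ ∈ S1} => frameRel a.1 b.1 := by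
      constructor
      · intro a; exact (key a a).mpr rfl
      · intro a b hab; exact (key b a).mpr ((key a b).mp hab).symm
      · intro a b c hab hbc
        exact (key a c).mpr (((key a b).mp hab).trans ((key b c).mp hbc))
    refine ⟨h, ?_, ?_⟩
    · set s := Setoid.mk _ h
      have hwf : ∀ a b : {ℓ // ℓ ∈ S1}, (fun a b => frameRel a.1 b.1) a b →
          fFrame (idx a) = fFrame (idx b) := fun a b hab => (key a b).mp hab
      let g : Quotient s → Fin 9 := Quotient.lift (fun a => fFrame (idx a)) hwf
      have hg : Function.Bijective g := by
        constructor
        · intro x y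
          induction x using Quotient.ind
          induction y using Quotient.ind
          intro hxy
          exact Quotient.sound ((key _ _).mpr hxy)
        · intro v
          obtain ⟨n, hn⟩ := D7 v
          refine ⟨Quotient.mk s ⟨L n, memL n⟩, ?_⟩
          show fFrame (idx ⟨L n, memL n⟩) = v
          rw [idx_L n (memL n), hn]
      rw [Nat.card_eq_of_bijective g hg]
      simp
    · intro a
      have E : {b : {ℓ // ℓ ∈ S1} // frameRel a.1 b.1} ≃
          {n : Fin 36 // fFrame n = fFrame (idx a)} :=
        { toFun := fun b => ⟨idx b.1, ((key a b.1).mp b.2).symm⟩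
          invFun := fun n => ⟨⟨L n.1, memL n.1⟩,
            (key a ⟨L n.1, memL n.1⟩).mpr (by rw [idx_L n.1 (memL n.1)]; exact n.2.symm)⟩
          left_inv := fun b => by
            apply Subtype.ext; apply Subtype.ext
            exact hidx b.1
          right_inv := fun n => by
            apply Subtype.ext
            exact idx_L n.1 (memL n.1) }
      rw [Nat.card_congr E, Nat.card_eq_fintype_card, Fintype.card_subtype]
      exact D8 (fFrame (idx a))
end
end
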